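/- For every f ∈ S₀ and every ε > 0, there exists k ∈ ℕ (depending on f and ε) such that for all n ≥ k, inf over g ∈ S₀^{(n)} of d_□(f,g) ≤ ε. In fact the block averages f_n := Σ_{i,j∈[n]} ( n² ∫_{Q_{i,j}^n} f ) 1_{Q_{i,j}^n} satisfy d_□(f_n,f) → 0 as n→∞. -/

import Mathlib

open MeasureTheory Filter Set
open scoped ENNReal

noncomputable section

/-- The unit interval `[0,1]` as a subset of `ℝ`. -/
def I01 : Set ℝ := Set.Icc 0 1

/-- The block `Q_i^n` (1-indexed): `Q_1^n = [0, 1/n]`, `Q_i^n = ((i-1)/n, i/n]` for `i ≠ 1`. -/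
def Qblk (n i : ℕ) : Set ℝ :=
  if i = 1 then Set.Icc 0 (1 / (n : ℝ)) else Set.Ioc (((i : ℝ) - 1) / n) ((i : ℝ) / n)

/-- The block function `Σ_{i,j∈[n]} c i j · 1_{Q_{i,j}^n}(x,y)`. -/
def blockFun (n : ℕ) (c : ℕ → ℕ → ℝ) (x y : ℝ) : ℝ :=
  ∑ i ∈ Finset.Icc 1 n, ∑ j ∈ Finset.Icc 1 n,
    c i j * Set.indicator (Qblk n i) (fun _ => (1 : ℝ)) x
      * Set.indicator (Qblk n j) (fun _ => (1 : ℝ)) y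

/-- The cut metric `d_□` between two kernels, taking the supremum over measurable
subsets `S, T ⊆ [0,1]`. -/
def cutDist (f g : ℝ → ℝ → ℝ) : ℝ :=
  ⨆ (S : Set ℝ) (T : Set ℝ)
    (_ : MeasurableSet S ∧ S ⊆ I01 ∧ MeasurableSet T ∧ T ⊆ I01),
    |∫ x in S, (∫ y in T, (f x y - g x y))|

lemma measurableSet_Qblk (n i : ℕ) : MeasurableSet (Qblk n i) := by
  unfold Qblk; split <;> [exact measurableSet_Icc; exact measurableSet_Ioc]

lemma Qblk_subset_Icc (n i : ℕ) :
    Qblk n i ⊆ Set.Icc (((i:ℝ) - 1) / n) ((i:ℝ) / n) := by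
  unfold Qblk; split
  case isTrue h => subst h; simp
  case isFalse h => exact Set.Ioc_subset_Icc_self

lemma Qblk_subset_I01 (n i : ℕ) (hn : 1 ≤ n) (hi1 : 1 ≤ i) (hi2 : i ≤ n) :
    Qblk n i ⊆ I01 := by
  refine (Qblk_subset_Icc n i).trans ?_
  have hn0 : (0:ℝ) < n := by exact_mod_cast hn
  apply Set.Icc_subset_Icc
  · apply div_nonneg _ hn0.le; simp; exact_mod_cast hi1
  · rw [div_le_one hn0]; exact_mod_cast hi2

lemma abs_sub_le_of_mem_Qblk (n i : ℕ) {x u : ℝ}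
    (hx : x ∈ Qblk n i) (hu : u ∈ Qblk n i) : |x - u| ≤ 1 / n := by
  have h1 := Qblk_subset_Icc n i hx
  have h2 := Qblk_subset_Icc n i hu
  have := Real.dist_le_of_mem_Icc h1 h2
  rw [Real.dist_eq] at this
  refine this.trans_eq ?_
  rw [div_sub_div_same]; ring_nf

lemma volume_Qblk (n i : ℕ) (hi : 1 ≤ i) :
    volume (Qblk n i) = ENNReal.ofReal (1 / n) := by
  unfold Qblk; split
  case isTrue h => rw [Real.volume_Icc]; ring_nf
  case isFalse h => rw [Real.volume_Ioc, div_sub_div_same]; ring_nf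

lemma Qblk_disjoint (n : ℕ) {i j : ℕ} (hi : 1 ≤ i) (hj : 1 ≤ j) (hij : i ≠ j) :
    Disjoint (Qblk n i) (Qblk n j) := by
  wlog h : i < j generalizing i j
  · exact (this hj hi hij.symm (by omega)).symm
  have hj1 : j ≠ 1 := by omega
  have hsub1 : Qblk n i ⊆ Set.Iic ((i:ℝ)/n) := by
    refine (Qblk_subset_Icc n i).trans ?_; intro x hx; exact hx.2
  have hsub2 : Qblk n j ⊆ Set.Ioi (((j:ℝ)-1)/n) := by
    unfold Qblk; rw [if_neg hj1]; intro x hx; exact hx.1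
  refine Disjoint.mono hsub1 hsub2 (Iic_disjoint_Ioi ?_)
  gcongr
  have : (i:ℝ) + 1 ≤ j := by exact_mod_cast h
  linarith

lemma Qblk_union (n : ℕ) (hn : 1 ≤ n) :
    ⋃ i ∈ Finset.Icc 1 n, Qblk n i = I01 := by
  have hn0 : (0:ℝ) < n := by exact_mod_cast hn
  apply Set.Subset.antisymm
  · simp only [Set.iUnion_subset_iff]
    intro i hi; simp only [Finset.mem_Icc] at hi
    exact Qblk_subset_I01 n i hn hi.1 hi.2
  · intro x hx
    obtain ⟨hx0, hx1⟩ := hx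
    simp only [Set.mem_iUnion, Finset.mem_Icc, exists_prop]
    by_cases hsm : x ≤ 1 / n
    · exact ⟨1, ⟨le_refl 1, hn⟩, by unfold Qblk; rw [if_pos rfl]; exact ⟨hx0, hsm⟩⟩
    · push_neg at hsm
      set i := ⌈(n:ℝ) * x⌉₊ with hidef
      have hnx1 : (1:ℝ) < n * x := by
        rw [div_lt_iff₀ hn0] at hsm; linarith
      have hi2 : 2 ≤ i := by
        have : (1:ℝ) < i := hnx1.trans_le (Nat.le_ceil _)
        by_contra hcon
        push_neg at hcon
        interval_cases i <;> simp_all <;> linarith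
      have hin : i ≤ n := by
        apply Nat.ceil_le.2; calc (n:ℝ) * x ≤ n * 1 := by nlinarith
        _ = n := by ring
      refine ⟨i, ⟨by omega, hin⟩, ?_⟩
      unfold Qblk; rw [if_neg (by omega)]
      constructor
      · rw [div_lt_iff₀ hn0]
        have := Nat.ceil_lt_add_one (a := (n:ℝ)*x) (by positivity)
        rw [mul_comm]; linarith
      · rw [le_div_iff₀ hn0]
        have := Nat.le_ceil ((n:ℝ)*x)
        rw [mul_comm]; linarith

lemma cutDist_nonneg (f g : ℝ → ℝ → ℝ) : 0 ≤ cutDist f g := by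
  apply Real.iSup_nonneg; intro S
  apply Real.iSup_nonneg; intro T
  apply Real.iSup_nonneg; intro _
  exact abs_nonneg _

lemma cutDist_le (f g : ℝ → ℝ → ℝ) {B : ℝ} (hB : 0 ≤ B)
    (h : ∀ S T : Set ℝ, MeasurableSet S → S ⊆ I01 → MeasurableSet T → T ⊆ I01 →
      |∫ x in S, (∫ y in T, (f x y - g x y))| ≤ B) : cutDist f g ≤ B := by
  apply Real.iSup_le _ hB; intro S
  apply Real.iSup_le _ hB; intro T
  apply Real.iSup_le _ hB; intro hST
  exact h S T hST.1 hST.2.1 hST.2.2.1 hST.2.2.2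

lemma blockFun_eval (n : ℕ) (c : ℕ → ℕ → ℝ) {i j : ℕ} (hi : i ∈ Finset.Icc 1 n)
    (hj : j ∈ Finset.Icc 1 n) {x y : ℝ} (hx : x ∈ Qblk n i) (hy : y ∈ Qblk n j) :
    blockFun n c x y = c i j := by
  simp only [Finset.mem_Icc] at hi hj
  unfold blockFun
  rw [Finset.sum_eq_single i]
  · rw [Finset.sum_eq_single j]
    · rw [Set.indicator_of_mem hx, Set.indicator_of_mem hy]; ring
    · intro j' hj' hne
      simp only [Finset.mem_Icc] at hj'
      rw [Set.indicator_of_notMem (Set.disjoint_left.1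
        (Qblk_disjoint n hj.1 hj'.1 (Ne.symm hne)) hy)]
      ring
    · intro h; exact absurd (Finset.mem_Icc.2 hj) h
  · intro i' hi' hne
    simp only [Finset.mem_Icc] at hi'
    rw [Set.indicator_of_notMem (Set.disjoint_left.1
      (Qblk_disjoint n hi.1 hi'.1 (Ne.symm hne)) hx)]
    simp
  · intro h; exact absurd (Finset.mem_Icc.2 hi) h

lemma blockFun_measurable (n : ℕ) (c : ℕ → ℕ → ℝ) :
    Measurable (fun q : ℝ × ℝ => blockFun n c q.1 q.2) := by
  unfold blockFun
  apply Finset.measurable_sum; intro i _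
  apply Finset.measurable_sum; intro j _
  exact ((measurable_const.mul
    ((measurable_const.indicator (measurableSet_Qblk n i)).comp measurable_fst)).mul
    ((measurable_const.indicator (measurableSet_Qblk n j)).comp measurable_snd))

/-- For `x ∈ I01` there is a unique block containing it; used to evaluate `blockFun`. -/
lemma exists_mem_Qblk (n : ℕ) (hn : 1 ≤ n) {x : ℝ} (hx : x ∈ I01) :
    ∃ i ∈ Finset.Icc 1 n, x ∈ Qblk n i := by
  have := Qblk_union n hn
  rw [← this] at hx
  simpa using hx

lemma blockFun_mem (n : ℕ) (hn : 1 ≤ n) {c : ℕ → ℕ → ℝ}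
    (hc : ∀ i ∈ Finset.Icc 1 n, ∀ j ∈ Finset.Icc 1 n, c i j ∈ Set.Icc (0:ℝ) 1)
    {x y : ℝ} (hx : x ∈ I01) (hy : y ∈ I01) : blockFun n c x y ∈ Set.Icc (0:ℝ) 1 := by
  obtain ⟨i, hi, hxi⟩ := exists_mem_Qblk n hn hx
  obtain ⟨j, hj, hyj⟩ := exists_mem_Qblk n hn hy
  rw [blockFun_eval n c hi hj hxi hyj]
  exact hc i hi j hj

/-- Bounded measurable functions are integrable on measurable subsets of `I01`. -/
lemma integrableOn_of_bound {h : ℝ → ℝ} (hm : Measurable h) {s : Set ℝ}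
    (hs : MeasurableSet s) (hsub : s ⊆ I01) (C : ℝ) (hb : ∀ x ∈ s, |h x| ≤ C) :
    IntegrableOn h s := by
  apply Measure.integrableOn_of_bounded (M := C) _ hm.aestronglyMeasurable
  · rw [ae_restrict_iff' hs]
    filter_upwards with x hx using by rw [Real.norm_eq_abs]; exact hb x hx
  · refine ne_of_lt (lt_of_le_of_lt (measure_mono hsub) ?_)
    simp [I01]

lemma sect_meas {D : ℝ → ℝ → ℝ} (hm : Measurable (fun q : ℝ × ℝ => D q.1 q.2)) (x : ℝ) :
    Measurable (fun y => D x y) := hm.comp measurable_prodMk_left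

lemma int_meas {D : ℝ → ℝ → ℝ} (hm : Measurable (fun q : ℝ × ℝ => D q.1 q.2)) (T : Set ℝ) :
    Measurable (fun x => ∫ y in T, D x y) :=
  (MeasureTheory.StronglyMeasurable.integral_prod_right
    hm.stronglyMeasurable).measurable

lemma integral_one_I01 : (∫ _ in I01, (1:ℝ)) = 1 := by
  rw [setIntegral_const]; simp [I01, Real.volume_Icc]

lemma integrableOn_const_I01sub {s : Set ℝ} (hsub : s ⊆ I01) (C : ℝ) :
    IntegrableOn (fun _ : ℝ => C) s := by
  refine integrableOn_const ?_ (by simp)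
  exact (lt_of_le_of_lt (measure_mono hsub) (by simp [I01])).ne

lemma cut_bound {D : ℝ → ℝ → ℝ} (hm : Measurable (fun q : ℝ × ℝ => D q.1 q.2))
    (hb : ∀ x ∈ I01, ∀ y ∈ I01, |D x y| ≤ 1)
    {S T : Set ℝ} (hS : MeasurableSet S) (hS1 : S ⊆ I01)
    (hT : MeasurableSet T) (hT1 : T ⊆ I01) :
    |∫ x in S, ∫ y in T, D x y| ≤ ∫ x in I01, ∫ y in I01, |D x y| := by
  have hDm : ∀ x, Measurable (fun y => |D x y|) := fun x => (sect_meas hm x).abs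
  have hint : ∀ x ∈ I01, IntegrableOn (fun y => |D x y|) I01 :=
    fun x hx => integrableOn_of_bound (hDm x) measurableSet_Icc (le_refl _) 1
      (fun y hy => by rw [abs_abs]; exact hb x hx y hy)
  have hintD : ∀ x ∈ I01, IntegrableOn (fun y => D x y) I01 :=
    fun x hx => integrableOn_of_bound (sect_meas hm x) measurableSet_Icc (le_refl _) 1
      (fun y hy => hb x hx y hy)
  -- pointwise bound on the inner integral
  have hGmeas : Measurable (fun x => ∫ y in I01, |D x y|) :=
    int_meas (D := fun x y => |D x y|) hm.abs I01
  have hGnn : ∀ x, 0 ≤ ∫ y in I01, |D x y| :=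
    fun x => integral_nonneg (fun y => abs_nonneg _)
  have hG1 : ∀ x ∈ I01, (∫ y in I01, |D x y|) ≤ 1 := by
    intro x hx
    calc (∫ y in I01, |D x y|) ≤ ∫ _ in I01, (1:ℝ) :=
          setIntegral_mono_on (hint x hx) (integrableOn_const_I01sub (le_refl _) 1)
            measurableSet_Icc (fun y hy => hb x hx y hy)
      _ = 1 := integral_one_I01
  have hptw : ∀ x ∈ S, |∫ y in T, D x y| ≤ ∫ y in I01, |D x y| := by
    intro x hx
    calc |∫ y in T, D x y| ≤ ∫ y in T, |D x y| := by
          simpa [Real.norm_eq_abs] using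
            norm_integral_le_integral_norm (μ := volume.restrict T) (fun y => D x y)
      _ ≤ ∫ y in I01, |D x y| :=
          setIntegral_mono_set (hint x (hS1 hx)) (Filter.Eventually.of_forall fun y => abs_nonneg _)
            (HasSubset.Subset.eventuallyLE hT1)
  have hHmeas : Measurable (fun x => ∫ y in T, D x y) := int_meas hm T
  have hHint : IntegrableOn (fun x => |∫ y in T, D x y|) S :=
    integrableOn_of_bound hHmeas.abs hS hS1 1 (fun x hx => by
      rw [abs_abs]
      exact (hptw x hx).trans (hG1 x (hS1 hx)))
  have hGint : IntegrableOn (fun x => ∫ y in I01, |D x y|) I01 :=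
    integrableOn_of_bound hGmeas measurableSet_Icc (le_refl _) 1
      (fun x hx => by rw [abs_of_nonneg (hGnn x)]; exact hG1 x hx)
  calc |∫ x in S, ∫ y in T, D x y| ≤ ∫ x in S, |∫ y in T, D x y| := by
        simpa [Real.norm_eq_abs] using
          norm_integral_le_integral_norm (μ := volume.restrict S) (fun x => ∫ y in T, D x y)
    _ ≤ ∫ x in S, ∫ y in I01, |D x y| :=
        setIntegral_mono_on hHint (hGint.mono_set hS1) hS hptw
    _ ≤ ∫ x in I01, ∫ y in I01, |D x y| :=
        setIntegral_mono_set hGint (Filter.Eventually.of_forall hGnn)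
          (HasSubset.Subset.eventuallyLE hS1)

lemma integral_const_Qblk (n i : ℕ) (hi : 1 ≤ i) (C : ℝ) :
    (∫ _ in Qblk n i, C) = (1 / n) * C := by
  rw [setIntegral_const, measureReal_def, volume_Qblk n i hi, ENNReal.toReal_ofReal (by positivity)]
  rw [smul_eq_mul]

section Kernel
variable {f : ℝ → ℝ → ℝ} (hf_meas : Measurable (fun q : ℝ × ℝ => f q.1 q.2))
  (hf_01 : ∀ x ∈ I01, ∀ y ∈ I01, f x y ∈ Set.Icc (0:ℝ) 1)

include hf_meas hf_01

lemma inner_int_bounds {n j : ℕ} (hn : 1 ≤ n) (hj1 : 1 ≤ j) (hj2 : j ≤ n)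
    {x : ℝ} (hx : x ∈ I01) :
    (0 ≤ ∫ y in Qblk n j, f x y) ∧ (∫ y in Qblk n j, f x y) ≤ 1 / n := by
  have hQj := Qblk_subset_I01 n j hn hj1 hj2
  have hint : IntegrableOn (fun y => f x y) (Qblk n j) :=
    integrableOn_of_bound (sect_meas hf_meas x) (measurableSet_Qblk n j) hQj 1
      (fun y hy => abs_le.2 ⟨by linarith [(hf_01 x hx y (hQj hy)).1],
          (hf_01 x hx y (hQj hy)).2⟩)
  constructor
  · exact setIntegral_nonneg (measurableSet_Qblk n j)
      (fun y hy => (hf_01 x hx y (hQj hy)).1)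
  · calc (∫ y in Qblk n j, f x y) ≤ ∫ _ in Qblk n j, (1:ℝ) :=
        setIntegral_mono_on hint (integrableOn_const_I01sub hQj 1)
          (measurableSet_Qblk n j) (fun y hy => (hf_01 x hx y (hQj hy)).2)
      _ = 1 / n := by rw [integral_const_Qblk n j hj1]; ring

lemma avg_mem {n i j : ℕ} (hn : 1 ≤ n) (hi : i ∈ Finset.Icc 1 n) (hj : j ∈ Finset.Icc 1 n) :
    (n : ℝ) ^ 2 * (∫ x in Qblk n i, (∫ y in Qblk n j, f x y)) ∈ Set.Icc (0:ℝ) 1 := by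
  simp only [Finset.mem_Icc] at hi hj
  have hQi := Qblk_subset_I01 n i hn hi.1 hi.2
  have hn0 : (0:ℝ) < n := by exact_mod_cast hn
  have hbd : ∀ x ∈ Qblk n i, (0 ≤ ∫ y in Qblk n j, f x y) ∧ (∫ y in Qblk n j, f x y) ≤ 1/n :=
    fun x hx => inner_int_bounds hf_meas hf_01 hn hj.1 hj.2 (hQi hx)
  have hms : Measurable (fun x => ∫ y in Qblk n j, f x y) := int_meas hf_meas _
  have hint : IntegrableOn (fun x => ∫ y in Qblk n j, f x y) (Qblk n i) :=
    integrableOn_of_bound hms (measurableSet_Qblk n i) hQi (1/n)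
      (fun x hx => abs_le.2 ⟨by linarith [(hbd x hx).1, one_div_pos.2 hn0], (hbd x hx).2⟩)
  have h0 : 0 ≤ ∫ x in Qblk n i, (∫ y in Qblk n j, f x y) :=
    setIntegral_nonneg (measurableSet_Qblk n i) (fun x hx => (hbd x hx).1)
  have h1 : (∫ x in Qblk n i, (∫ y in Qblk n j, f x y)) ≤ 1/n * (1/n) := by
    calc (∫ x in Qblk n i, (∫ y in Qblk n j, f x y)) ≤ ∫ _ in Qblk n i, (1/n : ℝ) :=
        setIntegral_mono_on hint (integrableOn_const_I01sub hQi _)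
          (measurableSet_Qblk n i) (fun x hx => (hbd x hx).2)
      _ = 1/n * (1/n) := integral_const_Qblk n i hi.1 _
  constructor
  · positivity
  · have h2 := mul_le_mul_of_nonneg_left h1 (le_of_lt (by positivity : (0:ℝ) < (n:ℝ)^2))
    have h3 : (n:ℝ)^2 * (1/n*(1/n)) = 1 := by field_simp
    linarith

end Kernel

lemma zero_mem_I01 : (0:ℝ) ∈ I01 := ⟨le_refl 0, zero_le_one⟩

lemma abs_setIntegral_le {h : ℝ → ℝ → ℝ} (hm : Measurable (fun q : ℝ × ℝ => h q.1 q.2))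
    {C : ℝ} (hb : ∀ x ∈ I01, ∀ y ∈ I01, |h x y| ≤ C)
    {s : Set ℝ} (ms : MeasurableSet s) (hs : s ⊆ I01) {x : ℝ} (hx : x ∈ I01) :
    |∫ y in s, h x y| ≤ C := by
  have hC0 : 0 ≤ C := le_trans (abs_nonneg _) (hb 0 zero_mem_I01 0 zero_mem_I01)
  have hint : IntegrableOn (fun y => h x y) s :=
    integrableOn_of_bound (sect_meas hm x) ms hs C (fun y hy => hb x hx y (hs hy))
  calc |∫ y in s, h x y| ≤ ∫ y in s, |h x y| := by
        simpa [Real.norm_eq_abs] using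
          norm_integral_le_integral_norm (μ := volume.restrict s) (fun y => h x y)
    _ ≤ ∫ _ in s, C := setIntegral_mono_on hint.abs (integrableOn_const_I01sub hs C)
        ms (fun y hy => hb x hx y (hs hy))
    _ = (volume s).toReal * C := by rw [setIntegral_const, smul_eq_mul, measureReal_def]
    _ ≤ 1 * C := by
        apply mul_le_mul_of_nonneg_right _ hC0
        have h1 : volume s ≤ 1 := by
          refine le_trans (measure_mono hs) ?_; simp [I01]
        calc (volume s).toReal ≤ (1 : ℝ≥0∞).toReal :=
          ENNReal.toReal_mono (by simp) h1
          _ = 1 := by simp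
    _ = C := one_mul C

lemma decomp {h : ℝ → ℝ → ℝ} (hm : Measurable (fun q : ℝ × ℝ => h q.1 q.2))
    {C : ℝ} (hb : ∀ x ∈ I01, ∀ y ∈ I01, |h x y| ≤ C) {n : ℕ} (hn : 1 ≤ n) :
    (∫ x in I01, (∫ y in I01, h x y))
      = ∑ i ∈ Finset.Icc 1 n, ∑ j ∈ Finset.Icc 1 n,
          ∫ x in Qblk n i, (∫ y in Qblk n j, h x y) := by
  have hC0 : 0 ≤ C := le_trans (abs_nonneg _) (hb 0 zero_mem_I01 0 zero_mem_I01)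
  have hQ : ∀ i ∈ Finset.Icc 1 n, Qblk n i ⊆ I01 := fun i hi =>
    Qblk_subset_I01 n i hn (Finset.mem_Icc.1 hi).1 (Finset.mem_Icc.1 hi).2
  have hpair : Set.Pairwise ↑(Finset.Icc 1 n) (Function.onFun Disjoint (Qblk n)) := by
    intro i hi j hj hij
    simp only [Finset.coe_Icc, Set.mem_Icc] at hi hj
    exact Qblk_disjoint n hi.1 hj.1 hij
  have hsect : ∀ x ∈ I01, IntegrableOn (fun y => h x y) I01 := fun x hx =>
    integrableOn_of_bound (sect_meas hm x) measurableSet_Icc (le_refl _) C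
      (fun y hy => hb x hx y hy)
  -- inner decomposition
  have hinner : ∀ x ∈ I01, (∫ y in I01, h x y)
      = ∑ j ∈ Finset.Icc 1 n, ∫ y in Qblk n j, h x y := by
    intro x hx
    rw [← Qblk_union n hn]
    exact integral_biUnion_finset _ (fun j _ => measurableSet_Qblk n j) hpair
      (fun j hj => (hsect x hx).mono_set (hQ j hj))
  -- outer decomposition
  have hFmeas : Measurable (fun x => ∫ y in I01, h x y) := int_meas hm I01
  have hFint : IntegrableOn (fun x => ∫ y in I01, h x y) I01 :=
    integrableOn_of_bound hFmeas measurableSet_Icc (le_refl _) C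
      (fun x hx => abs_setIntegral_le hm hb measurableSet_Icc (le_refl _) hx)
  have houter : (∫ x in I01, (∫ y in I01, h x y))
      = ∑ i ∈ Finset.Icc 1 n, ∫ x in Qblk n i, (∫ y in I01, h x y) := by
    nth_rewrite 1 [← Qblk_union n hn]
    exact integral_biUnion_finset _ (fun i _ => measurableSet_Qblk n i) hpair
      (fun i hi => hFint.mono_set (hQ i hi))
  rw [houter]
  apply Finset.sum_congr rfl
  intro i hi
  rw [setIntegral_congr_fun (measurableSet_Qblk n i)
    (fun x hx => hinner x (hQ i hi hx))]
  apply integral_finset_sum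
  intro j hj
  apply integrableOn_of_bound (int_meas hm (Qblk n j)) (measurableSet_Qblk n i) (hQ i hi) C
  exact fun x hx => abs_setIntegral_le hm hb (measurableSet_Qblk n j) (hQ j hj) (hQ i hi hx)

lemma integrableOn_const_Qblk (n j : ℕ) (hj : 1 ≤ j) (c : ℝ) :
    IntegrableOn (fun _ : ℝ => c) (Qblk n j) := by
  refine integrableOn_const ?_ (by simp)
  rw [volume_Qblk n j hj]; exact ENNReal.ofReal_ne_top

lemma g_cell_close {g : ℝ × ℝ → ℝ} (gcont : Continuous g) {n i j : ℕ} (hn : 1 ≤ n)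
    (hi1 : 1 ≤ i) (hi2 : i ≤ n) (hj1 : 1 ≤ j) (hj2 : j ≤ n) {η : ℝ} (hη : 0 ≤ η)
    (hclose : ∀ p q : ℝ × ℝ, p ∈ (Qblk n i) ×ˢ (Qblk n j) → q ∈ (Qblk n i) ×ˢ (Qblk n j) →
      |g p - g q| ≤ η)
    {p : ℝ × ℝ} (hp : p ∈ (Qblk n i) ×ˢ (Qblk n j)) :
    |g p - (n:ℝ)^2 * ∫ u in Qblk n i, (∫ v in Qblk n j, g (u, v))| ≤ η := by
  have hn0 : (0:ℝ) < n := by exact_mod_cast hn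
  have gmeas : Measurable (fun q : ℝ × ℝ => g (q.1, q.2)) := gcont.measurable
  have hQi := Qblk_subset_I01 n i hn hi1 hi2
  have hint1 : ∀ u : ℝ, IntegrableOn (fun v => g (u, v)) (Qblk n j) := fun u =>
    ((gcont.comp (Continuous.prodMk_right u)).integrableOn_Icc).mono_set (Qblk_subset_Icc n j)
  set K : ℝ → ℝ := fun u => ∫ v in Qblk n j, (g (u, v) - g p) with hK
  have hKeq : ∀ u, K u = (∫ v in Qblk n j, g (u, v)) - (1/n) * g p := by
    intro u
    show (∫ v in Qblk n j, (g (u, v) - g p)) = _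
    rw [integral_sub (hint1 u) (integrableOn_const_Qblk n j hj1 _),
      integral_const_Qblk n j hj1]
  have hKmeas : Measurable K := by
    have : Measurable (fun u => (∫ v in Qblk n j, g (u, v)) - (1/n) * g p) :=
      (int_meas (D := fun x y => g (x, y)) gmeas (Qblk n j)).sub measurable_const
    exact (funext hKeq : K = _).symm ▸ this
  have hKbd : ∀ u ∈ Qblk n i, |K u| ≤ η * (1/n) := by
    intro u hu
    calc |K u| ≤ ∫ v in Qblk n j, |g (u, v) - g p| := by
          simpa [Real.norm_eq_abs] using
            norm_integral_le_integral_norm (μ := volume.restrict (Qblk n j))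
              (fun v => g (u, v) - g p)
      _ ≤ ∫ _ in Qblk n j, η :=
          setIntegral_mono_on ((hint1 u).sub (integrableOn_const_Qblk n j hj1 _)).abs
            (integrableOn_const_Qblk n j hj1 η) (measurableSet_Qblk n j)
            (fun v hv => hclose (u, v) p ⟨hu, hv⟩ hp)
      _ = (1/n) * η := integral_const_Qblk n j hj1 η
      _ = η * (1/n) := by ring
  have hKint : IntegrableOn K (Qblk n i) :=
    integrableOn_of_bound hKmeas (measurableSet_Qblk n i) hQi (η * (1/n))
      (fun u hu => hKbd u hu)
  have h1 : (∫ u in Qblk n i, K u)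
      = (∫ u in Qblk n i, (∫ v in Qblk n j, g (u, v))) - (1/n) * ((1/n) * g p) := by
    rw [setIntegral_congr_fun (measurableSet_Qblk n i) (fun u _ => hKeq u)]
    have hGint : IntegrableOn (fun u => ∫ v in Qblk n j, g (u, v)) (Qblk n i) := by
      apply (hKint.add (integrableOn_const_Qblk n i hi1 ((1/n) * g p))).congr
      apply Filter.Eventually.of_forall
      intro u; simp only [Pi.add_apply]; rw [hKeq u]; ring
    rw [integral_sub hGint (integrableOn_const_Qblk n i hi1 _),
      integral_const_Qblk n i hi1]
  have h2 : |∫ u in Qblk n i, K u| ≤ (1/n) * (η * (1/n)) := by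
    calc |∫ u in Qblk n i, K u| ≤ ∫ u in Qblk n i, |K u| := by
          simpa [Real.norm_eq_abs] using
            norm_integral_le_integral_norm (μ := volume.restrict (Qblk n i)) K
      _ ≤ ∫ _ in Qblk n i, (η * (1/n)) :=
          setIntegral_mono_on hKint.abs (integrableOn_const_Qblk n i hi1 _)
            (measurableSet_Qblk n i) hKbd
      _ = (1/n) * (η * (1/n)) := integral_const_Qblk n i hi1 _
  have h3 : g p - (n:ℝ)^2 * (∫ u in Qblk n i, (∫ v in Qblk n j, g (u, v)))
      = -((n:ℝ)^2 * (∫ u in Qblk n i, K u)) := by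
    rw [h1]; field_simp; ring
  rw [h3, abs_neg, abs_mul, abs_of_nonneg (by positivity : (0:ℝ) ≤ (n:ℝ)^2)]
  calc (n:ℝ)^2 * |∫ u in Qblk n i, K u| ≤ (n:ℝ)^2 * ((1/n) * (η * (1/n))) :=
      mul_le_mul_of_nonneg_left h2 (by positivity)
    _ = η := by field_simp

def avgc (f : ℝ → ℝ → ℝ) (n : ℕ) : ℕ → ℕ → ℝ := fun i j =>
  (n : ℝ) ^ 2 * ∫ x in Qblk n i, (∫ y in Qblk n j, f x y)

section Core
variable {f : ℝ → ℝ → ℝ} (hf_meas : Measurable (fun q : ℝ × ℝ => f q.1 q.2))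
  (hf_01 : ∀ x ∈ I01, ∀ y ∈ I01, f x y ∈ Set.Icc (0:ℝ) 1)
include hf_meas hf_01

set_option maxHeartbeats 2000000 in
lemma core (ε : ℝ) (hε : 0 < ε) : ∃ N : ℕ, 1 ≤ N ∧ ∀ n, N ≤ n →
    (∫ x in I01, (∫ y in I01, |f x y - blockFun n (avgc f n) x y|)) ≤ ε := by
  have msq : MeasurableSet (I01 ×ˢ I01) :=
    (measurableSet_Icc : MeasurableSet I01).prod measurableSet_Icc
  have hvolsq : (volume : Measure (ℝ × ℝ)) = (volume : Measure ℝ).prod volume :=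
    Measure.volume_eq_prod ℝ ℝ
  have hIOn : IntegrableOn (fun q : ℝ × ℝ => f q.1 q.2) (I01 ×ˢ I01) volume := by
    apply Measure.integrableOn_of_bounded (M := 1) _ hf_meas.aestronglyMeasurable
    · rw [ae_restrict_iff' msq]
      filter_upwards with q hq
      rw [Real.norm_eq_abs]
      have h := hf_01 q.1 hq.1 q.2 hq.2
      exact abs_le.2 ⟨by linarith [h.1], h.2⟩
    · rw [hvolsq, Measure.prod_prod]
      simp [I01]
  have hF : Integrable ((I01 ×ˢ I01).indicator fun q : ℝ × ℝ => f q.1 q.2) volume :=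
    (integrable_indicator_iff msq).2 hIOn
  obtain ⟨g, gsupp, gL1, gcont, gint⟩ :=
    hF.exists_hasCompactSupport_integral_sub_le (by positivity : (0:ℝ) < ε/4)
  obtain ⟨Cg, hCg⟩ := gcont.bounded_above_of_compact_support gsupp
  have hCg' : ∀ p : ℝ × ℝ, |g p| ≤ Cg := fun p => by
    rw [← Real.norm_eq_abs]; exact hCg p
  have gmeas : Measurable (fun q : ℝ × ℝ => g (q.1, q.2)) := gcont.measurable
  have gUC : UniformContinuous g := gsupp.uniformContinuous_of_continuous gcont
  rw [Metric.uniformContinuous_iff] at gUC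
  obtain ⟨δ, hδ0, hδ⟩ := gUC (ε/4) (by positivity)
  obtain ⟨N0, hN0⟩ := exists_nat_one_div_lt hδ0
  refine ⟨N0 + 1, Nat.succ_le_succ (Nat.zero_le _), ?_⟩
  intro n hn
  have hn1 : 1 ≤ n := le_trans (Nat.succ_le_succ (Nat.zero_le _)) hn
  have hn0 : (0:ℝ) < n := by exact_mod_cast hn1
  have hδn : (1:ℝ)/n < δ := by
    refine lt_of_le_of_lt ?_ hN0
    apply one_div_le_one_div_of_le
    · positivity
    · exact_mod_cast hn
  -- closeness of `g` on each cell
  have hcell : ∀ i j : ℕ, ∀ p q : ℝ × ℝ, p ∈ Qblk n i ×ˢ Qblk n j →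
      q ∈ Qblk n i ×ˢ Qblk n j → |g p - g q| ≤ ε/4 := by
    intro i j p q hp hq
    have hd : dist p q < δ := by
      rw [Prod.dist_eq]
      apply max_lt
      · rw [Real.dist_eq]
        exact lt_of_le_of_lt (abs_sub_le_of_mem_Qblk n i hp.1 hq.1) hδn
      · rw [Real.dist_eq]
        exact lt_of_le_of_lt (abs_sub_le_of_mem_Qblk n j hp.2 hq.2) hδn
    have := hδ hd
    rw [Real.dist_eq] at this
    exact this.le
  -- abbreviations
  have hcmem : ∀ i ∈ Finset.Icc 1 n, ∀ j ∈ Finset.Icc 1 n, avgc f n i j ∈ Set.Icc (0:ℝ) 1 :=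
    fun i hi j hj => avg_mem hf_meas hf_01 hn1 hi hj
  have hQ : ∀ i ∈ Finset.Icc 1 n, Qblk n i ⊆ I01 := fun i hi =>
    Qblk_subset_I01 n i hn1 (Finset.mem_Icc.1 hi).1 (Finset.mem_Icc.1 hi).2
  have hb1 : ∀ x ∈ I01, ∀ y ∈ I01, |f x y| ≤ 1 := by
    intro x hx y hy
    have h := hf_01 x hx y hy
    exact abs_le.2 ⟨by linarith [h.1], h.2⟩
  have hBm := blockFun_measurable n (avgc f n)
  have hEm : Measurable (fun q : ℝ × ℝ => |f q.1 q.2 - blockFun n (avgc f n) q.1 q.2|) :=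
    (hf_meas.sub hBm).abs
  have hEb : ∀ x ∈ I01, ∀ y ∈ I01, |(|f x y - blockFun n (avgc f n) x y|)| ≤ 1 := by
    intro x hx y hy
    rw [abs_abs]
    have h1 := hf_01 x hx y hy
    have h2 := blockFun_mem n hn1 hcmem hx hy
    exact abs_le.2 ⟨by linarith [h1.1, h2.2], by linarith [h1.2, h2.1]⟩
  have hPm : Measurable (fun q : ℝ × ℝ => |f q.1 q.2 - g (q.1, q.2)|) :=
    (hf_meas.sub gmeas).abs
  have hPb : ∀ x ∈ I01, ∀ y ∈ I01, |(|f x y - g (x, y)|)| ≤ 1 + Cg := by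
    intro x hx y hy
    rw [abs_abs]
    have h2 := hCg' (x, y)
    calc |f x y - g (x, y)| ≤ |f x y| + |g (x, y)| := abs_sub _ _
      _ ≤ 1 + Cg := add_le_add (hb1 x hx y hy) h2
  have hdecE := decomp (h := fun x y => |f x y - blockFun n (avgc f n) x y|) hEm hEb hn1
  have hdecP := decomp (h := fun x y => |f x y - g (x, y)|) hPm hPb hn1
  -- per-cell bound
  have hcellbd : ∀ i ∈ Finset.Icc 1 n, ∀ j ∈ Finset.Icc 1 n,
      (∫ x in Qblk n i, (∫ y in Qblk n j, |f x y - blockFun n (avgc f n) x y|))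
        ≤ 2 * (∫ x in Qblk n i, (∫ y in Qblk n j, |f x y - g (x, y)|))
          + (1/(n:ℝ)^2) * (ε/4) := by
    intro i hi j hj
    have hi' := Finset.mem_Icc.1 hi
    have hj' := Finset.mem_Icc.1 hj
    have hQi := hQ i hi
    have hQj := hQ j hj
    have msQi := measurableSet_Qblk n i
    have msQj := measurableSet_Qblk n j
    set cg : ℝ := (n:ℝ)^2 * ∫ x in Qblk n i, (∫ y in Qblk n j, g (x, y)) with hcg
    have hgc : ∀ p ∈ (Qblk n i) ×ˢ (Qblk n j), |g p - cg| ≤ ε/4 := fun p hp =>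
      g_cell_close gcont hn1 hi'.1 hi'.2 hj'.1 hj'.2 (by positivity) (hcell i j) hp
    have hpt : ∀ x ∈ Qblk n i, ∀ y ∈ Qblk n j,
        |f x y - blockFun n (avgc f n) x y|
          ≤ |f x y - g (x, y)| + (ε/4 + |cg - avgc f n i j|) := by
      intro x hx y hy
      rw [blockFun_eval n (avgc f n) hi hj hx hy]
      calc |f x y - avgc f n i j|
          ≤ |f x y - g (x, y)| + |g (x, y) - avgc f n i j| := abs_sub_le _ _ _
        _ ≤ |f x y - g (x, y)| + (|g (x, y) - cg| + |cg - avgc f n i j|) :=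
            add_le_add_right (abs_sub_le _ cg _) _
        _ ≤ |f x y - g (x, y)| + (ε/4 + |cg - avgc f n i j|) :=
            add_le_add_right (add_le_add_left (hgc (x, y) ⟨hx, hy⟩) _) _
    have hEint : ∀ x ∈ I01,
        IntegrableOn (fun y => |f x y - blockFun n (avgc f n) x y|) (Qblk n j) := fun x hx =>
      integrableOn_of_bound (sect_meas (D := fun x y => |f x y - blockFun n (avgc f n) x y|) hEm x) msQj hQj 1 (fun y hy => hEb x hx y (hQj hy))
    have hPint : ∀ x ∈ I01,
        IntegrableOn (fun y => |f x y - g (x, y)|) (Qblk n j) := fun x hx =>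
      integrableOn_of_bound (sect_meas (D := fun x y => |f x y - g (x, y)|) hPm x) msQj hQj (1 + Cg)
        (fun y hy => hPb x hx y (hQj hy))
    have hinner : ∀ x ∈ Qblk n i,
        (∫ y in Qblk n j, |f x y - blockFun n (avgc f n) x y|)
          ≤ (∫ y in Qblk n j, |f x y - g (x, y)|) + (1/n) * (ε/4 + |cg - avgc f n i j|) := by
      intro x hx
      calc (∫ y in Qblk n j, |f x y - blockFun n (avgc f n) x y|)
          ≤ ∫ y in Qblk n j, (|f x y - g (x, y)| + (ε/4 + |cg - avgc f n i j|)) :=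
            setIntegral_mono_on (hEint x (hQi hx))
              ((hPint x (hQi hx)).add (integrableOn_const_Qblk n j hj'.1 _)) msQj
              (fun y hy => hpt x hx y hy)
        _ = (∫ y in Qblk n j, |f x y - g (x, y)|) + (1/n) * (ε/4 + |cg - avgc f n i j|) := by
            rw [integral_add (hPint x (hQi hx)) (integrableOn_const_Qblk n j hj'.1 _),
              integral_const_Qblk n j hj'.1]
    have hEOint : IntegrableOn
        (fun x => ∫ y in Qblk n j, |f x y - blockFun n (avgc f n) x y|) (Qblk n i) :=
      integrableOn_of_bound (int_meas (D := fun x y => |f x y - blockFun n (avgc f n) x y|) hEm (Qblk n j)) msQi hQi 1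
        (fun x hx => abs_setIntegral_le (h := fun x y => |f x y - blockFun n (avgc f n) x y|) hEm hEb msQj hQj (hQi hx))
    have hPOint : IntegrableOn
        (fun x => ∫ y in Qblk n j, |f x y - g (x, y)|) (Qblk n i) :=
      integrableOn_of_bound (int_meas (D := fun x y => |f x y - g (x, y)|) hPm (Qblk n j)) msQi hQi (1 + Cg)
        (fun x hx => abs_setIntegral_le (h := fun x y => |f x y - g (x, y)|) hPm hPb msQj hQj (hQi hx))
    have houter : (∫ x in Qblk n i, (∫ y in Qblk n j, |f x y - blockFun n (avgc f n) x y|))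
        ≤ (∫ x in Qblk n i, (∫ y in Qblk n j, |f x y - g (x, y)|))
          + (1/(n:ℝ)^2) * (ε/4 + |cg - avgc f n i j|) := by
      calc (∫ x in Qblk n i, (∫ y in Qblk n j, |f x y - blockFun n (avgc f n) x y|))
          ≤ ∫ x in Qblk n i, ((∫ y in Qblk n j, |f x y - g (x, y)|)
              + (1/n) * (ε/4 + |cg - avgc f n i j|)) :=
            setIntegral_mono_on hEOint (hPOint.add (integrableOn_const_Qblk n i hi'.1 _))
              msQi hinner
        _ = (∫ x in Qblk n i, (∫ y in Qblk n j, |f x y - g (x, y)|))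
              + (1/n) * ((1/n) * (ε/4 + |cg - avgc f n i j|)) := by
            rw [integral_add hPOint (integrableOn_const_Qblk n i hi'.1 _),
              integral_const_Qblk n i hi'.1]
        _ = (∫ x in Qblk n i, (∫ y in Qblk n j, |f x y - g (x, y)|))
              + (1/(n:ℝ)^2) * (ε/4 + |cg - avgc f n i j|) := by
            ring
    -- bound on |cg - c i j|
    have hIf_int : IntegrableOn (fun x => ∫ y in Qblk n j, f x y) (Qblk n i) :=
      integrableOn_of_bound (int_meas (D := fun x y => f x y) hf_meas (Qblk n j)) msQi hQi 1
        (fun x hx => abs_setIntegral_le (h := fun x y => f x y) hf_meas hb1 msQj hQj (hQi hx))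
    have hgb : ∀ x ∈ I01, ∀ y ∈ I01, |g (x, y)| ≤ Cg := fun x _ y _ => hCg' (x, y)
    have hIg_int : IntegrableOn (fun x => ∫ y in Qblk n j, g (x, y)) (Qblk n i) :=
      integrableOn_of_bound (int_meas (D := fun x y => g (x, y)) gmeas (Qblk n j)) msQi hQi Cg
        (fun x hx => abs_setIntegral_le (h := fun x y => g (x, y)) gmeas hgb msQj hQj (hQi hx))
    have hgsect : ∀ x : ℝ, IntegrableOn (fun y => g (x, y)) (Qblk n j) := fun x =>
      ((gcont.comp (Continuous.prodMk_right x)).integrableOn_Icc).mono_set (Qblk_subset_Icc n j)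
    have hfsect : ∀ x ∈ I01, IntegrableOn (fun y => f x y) (Qblk n j) := fun x hx =>
      integrableOn_of_bound (sect_meas hf_meas x) msQj hQj 1
        (fun y hy => hb1 x hx y (hQj hy))
    have h2 : |(∫ x in Qblk n i, (∫ y in Qblk n j, g (x, y)))
        - (∫ x in Qblk n i, (∫ y in Qblk n j, f x y))|
        ≤ ∫ x in Qblk n i, (∫ y in Qblk n j, |f x y - g (x, y)|) := by
      rw [← integral_sub hIg_int hIf_int]
      calc |∫ x in Qblk n i, ((∫ y in Qblk n j, g (x, y)) - (∫ y in Qblk n j, f x y))|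
          ≤ ∫ x in Qblk n i, |(∫ y in Qblk n j, g (x, y)) - (∫ y in Qblk n j, f x y)| := by
            simpa [Real.norm_eq_abs] using
              norm_integral_le_integral_norm (μ := volume.restrict (Qblk n i))
                (fun x => (∫ y in Qblk n j, g (x, y)) - (∫ y in Qblk n j, f x y))
        _ ≤ ∫ x in Qblk n i, (∫ y in Qblk n j, |f x y - g (x, y)|) := by
            apply setIntegral_mono_on (hIg_int.sub hIf_int).abs hPOint msQi
            intro x hx
            simp only [Pi.sub_apply]
            rw [← integral_sub (hgsect x) (hfsect x (hQi hx))]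
            calc |∫ y in Qblk n j, (g (x, y) - f x y)|
                ≤ ∫ y in Qblk n j, |g (x, y) - f x y| := by
                  simpa [Real.norm_eq_abs] using
                    norm_integral_le_integral_norm (μ := volume.restrict (Qblk n j))
                      (fun y => g (x, y) - f x y)
              _ = ∫ y in Qblk n j, |f x y - g (x, y)| :=
                  setIntegral_congr_fun msQj (fun y _ => abs_sub_comm _ _)
    have hcgc : (1/(n:ℝ)^2) * |cg - avgc f n i j|
        ≤ ∫ x in Qblk n i, (∫ y in Qblk n j, |f x y - g (x, y)|) := by
      have h1 : cg - avgc f n i j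
          = (n:ℝ)^2 * ((∫ x in Qblk n i, (∫ y in Qblk n j, g (x, y)))
              - (∫ x in Qblk n i, (∫ y in Qblk n j, f x y))) := by
        rw [hcg]; unfold avgc; ring
      rw [h1, abs_mul, abs_of_nonneg (by positivity : (0:ℝ) ≤ (n:ℝ)^2)]
      have heq : (1/(n:ℝ)^2) * ((n:ℝ)^2
          * |(∫ x in Qblk n i, (∫ y in Qblk n j, g (x, y)))
              - (∫ x in Qblk n i, (∫ y in Qblk n j, f x y))|)
          = |(∫ x in Qblk n i, (∫ y in Qblk n j, g (x, y)))
              - (∫ x in Qblk n i, (∫ y in Qblk n j, f x y))| := by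
        field_simp
      rw [heq]
      exact h2
    have hfinal := add_le_add_left
      (mul_le_mul_of_nonneg_left (add_le_add_left hcgc ((1:ℝ)/(n:ℝ)^2 * 0)) (le_refl (0:ℝ))) 0
    -- combine
    have expand : (1/(n:ℝ)^2) * (ε/4 + |cg - avgc f n i j|)
        = (1/(n:ℝ)^2) * (ε/4) + (1/(n:ℝ)^2) * |cg - avgc f n i j| := by ring
    rw [expand] at houter
    linarith [hcgc, houter]
  -- sum the per-cell bounds
  have hsum : (∫ x in I01, (∫ y in I01, |f x y - blockFun n (avgc f n) x y|))
      ≤ 2 * (∫ x in I01, (∫ y in I01, |f x y - g (x, y)|)) + ε/4 := by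
    rw [hdecE, hdecP]
    calc (∑ i ∈ Finset.Icc 1 n, ∑ j ∈ Finset.Icc 1 n,
          ∫ x in Qblk n i, (∫ y in Qblk n j, |f x y - blockFun n (avgc f n) x y|))
        ≤ ∑ i ∈ Finset.Icc 1 n, ∑ j ∈ Finset.Icc 1 n,
            (2 * (∫ x in Qblk n i, (∫ y in Qblk n j, |f x y - g (x, y)|))
              + (1/(n:ℝ)^2) * (ε/4)) :=
          Finset.sum_le_sum (fun i hi => Finset.sum_le_sum (fun j hj => hcellbd i hi j hj))
      _ = 2 * (∑ i ∈ Finset.Icc 1 n, ∑ j ∈ Finset.Icc 1 n,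
            ∫ x in Qblk n i, (∫ y in Qblk n j, |f x y - g (x, y)|)) + ε/4 := by
          have hcard : ((Finset.Icc 1 n).card : ℝ) = n := by
            rw [Nat.card_Icc]; simp
          simp only [Finset.sum_add_distrib, Finset.sum_const, nsmul_eq_mul, Finset.mul_sum]
          rw [hcard]
          field_simp
  -- bound ∫∫ |f - g| by the L¹ distance
  have hIOnP : IntegrableOn (fun q : ℝ × ℝ => |f q.1 q.2 - g q|) (I01 ×ˢ I01)
      ((volume : Measure ℝ).prod volume) := by
    rw [← hvolsq]; exact (hIOn.sub gint.integrableOn).abs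
  have hB1 : (∫ x in I01, (∫ y in I01, |f x y - g (x, y)|))
      = ∫ q in I01 ×ˢ I01, |f q.1 q.2 - g q| ∂((volume : Measure ℝ).prod volume) :=
    (setIntegral_prod (fun q : ℝ × ℝ => |f q.1 q.2 - g q|) hIOnP).symm
  have hB2 : (∫ q in I01 ×ˢ I01, |f q.1 q.2 - g q| ∂((volume : Measure ℝ).prod volume))
      ≤ ε/4 := by
    calc (∫ q in I01 ×ˢ I01, |f q.1 q.2 - g q| ∂((volume : Measure ℝ).prod volume))
        = ∫ q in I01 ×ˢ I01,
            ‖(I01 ×ˢ I01).indicator (fun q : ℝ × ℝ => f q.1 q.2) q - g q‖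
            ∂((volume : Measure ℝ).prod volume) :=
          setIntegral_congr_fun msq (fun q hq => by
            rw [Set.indicator_of_mem hq, Real.norm_eq_abs])
      _ ≤ ∫ q, ‖(I01 ×ˢ I01).indicator (fun q : ℝ × ℝ => f q.1 q.2) q - g q‖
            ∂((volume : Measure ℝ).prod volume) := by
          apply setIntegral_le_integral
          · rw [← hvolsq]; exact (hF.sub gint).norm
          · exact Filter.Eventually.of_forall (fun q => norm_nonneg _)
      _ = ∫ q, ‖(I01 ×ˢ I01).indicator (fun q : ℝ × ℝ => f q.1 q.2) q - g q‖ ∂volume := by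
          rw [← hvolsq]
      _ ≤ ε/4 := gL1
  calc (∫ x in I01, (∫ y in I01, |f x y - blockFun n (avgc f n) x y|))
      ≤ 2 * (∫ x in I01, (∫ y in I01, |f x y - g (x, y)|)) + ε/4 := hsum
    _ ≤ 2 * (ε/4) + ε/4 := by
        have := hB1.trans_le hB2
        linarith
    _ ≤ ε := by linarith

end Core

/-- **Lemma (approximation of graphons by block graphons in the cut metric).**
For every `f ∈ S₀` and `ε > 0`, the distance from `f` to the block graphons `S₀^{(n)}` is
at most `ε` for all large `n`; indeed the block averages `f_n` satisfy `d_□(f_n,f) → 0`. -/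
theorem block_approximation_in_cut_metric
    (f : ℝ → ℝ → ℝ) (hf_meas : Measurable (fun q : ℝ × ℝ => f q.1 q.2))
    (hf_01 : ∀ x ∈ I01, ∀ y ∈ I01, f x y ∈ Set.Icc (0:ℝ) 1) :
    (∀ ε : ℝ, 0 < ε → ∃ k : ℕ, ∀ n : ℕ, k ≤ n →
      sInf {r : ℝ | ∃ c : ℕ → ℕ → ℝ,
          (∀ i ∈ Finset.Icc 1 n, ∀ j ∈ Finset.Icc 1 n, c i j ∈ Set.Icc (0:ℝ) 1) ∧
          r = cutDist f (blockFun n c)} ≤ ε)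
    ∧ Tendsto
        (fun n : ℕ => cutDist
          (blockFun n (fun i j => (n : ℝ) ^ 2 * ∫ x in Qblk n i, (∫ y in Qblk n j, f x y)))
          f)
        atTop (nhds 0) := by
  have key : ∀ ε : ℝ, 0 < ε → ∃ N : ℕ, 1 ≤ N ∧ ∀ n, N ≤ n →
      (∫ x in I01, (∫ y in I01, |f x y - blockFun n (avgc f n) x y|)) ≤ ε :=
    fun ε hε => core hf_meas hf_01 ε hε
  have hDb : ∀ n : ℕ, 1 ≤ n → ∀ x ∈ I01, ∀ y ∈ I01,
      |f x y - blockFun n (avgc f n) x y| ≤ 1 := by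
    intro n hn1 x hx y hy
    have h1 := hf_01 x hx y hy
    have h2 := blockFun_mem n hn1 (c := avgc f n)
      (fun i hi j hj => avg_mem hf_meas hf_01 hn1 hi hj) hx hy
    exact abs_le.2 ⟨by linarith [h1.1, h2.2], by linarith [h1.2, h2.1]⟩
  constructor
  · intro ε hε
    obtain ⟨N, hN1, hN⟩ := key ε hε
    refine ⟨N, fun n hn => ?_⟩
    have hn1 : 1 ≤ n := le_trans hN1 hn
    have hmem : cutDist f (blockFun n (avgc f n)) ∈ {r : ℝ | ∃ c : ℕ → ℕ → ℝ,
        (∀ i ∈ Finset.Icc 1 n, ∀ j ∈ Finset.Icc 1 n, c i j ∈ Set.Icc (0:ℝ) 1) ∧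
        r = cutDist f (blockFun n c)} :=
      ⟨avgc f n, fun i hi j hj => avg_mem hf_meas hf_01 hn1 hi hj, rfl⟩
    have hbdd : BddBelow {r : ℝ | ∃ c : ℕ → ℕ → ℝ,
        (∀ i ∈ Finset.Icc 1 n, ∀ j ∈ Finset.Icc 1 n, c i j ∈ Set.Icc (0:ℝ) 1) ∧
        r = cutDist f (blockFun n c)} := by
      refine ⟨0, ?_⟩
      rintro r ⟨c, -, rfl⟩
      exact cutDist_nonneg f _
    refine le_trans (csInf_le hbdd hmem) ?_
    apply cutDist_le _ _ hε.le
    intro S T hS hS1 hT hT1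
    refine le_trans (cut_bound (D := fun x y => f x y - blockFun n (avgc f n) x y)
      (hf_meas.sub (blockFun_measurable n _)) (hDb n hn1) hS hS1 hT hT1) (hN n hn)
  · show Tendsto (fun n : ℕ => cutDist (blockFun n (avgc f n)) f) atTop (nhds 0)
    rw [Metric.tendsto_atTop]
    intro ε hε
    obtain ⟨N, hN1, hN⟩ := key (ε/2) (by positivity)
    refine ⟨N, fun n hn => ?_⟩
    have hn1 : 1 ≤ n := le_trans hN1 hn
    rw [dist_zero_right, Real.norm_eq_abs,
      abs_of_nonneg (cutDist_nonneg _ _)]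
    have hbd : cutDist (blockFun n (avgc f n)) f ≤ ε/2 := by
      apply cutDist_le _ _ (by positivity)
      intro S T hS hS1 hT hT1
      have hDb' : ∀ x ∈ I01, ∀ y ∈ I01, |blockFun n (avgc f n) x y - f x y| ≤ 1 :=
        fun x hx y hy => by rw [abs_sub_comm]; exact hDb n hn1 x hx y hy
      refine le_trans (cut_bound (D := fun x y => blockFun n (avgc f n) x y - f x y)
        ((blockFun_measurable n _).sub hf_meas) hDb' hS hS1 hT hT1) ?_
      have heq : (∫ x in I01, (∫ y in I01, |blockFun n (avgc f n) x y - f x y|))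
          = ∫ x in I01, (∫ y in I01, |f x y - blockFun n (avgc f n) x y|) := by
        apply setIntegral_congr_fun (measurableSet_Icc : MeasurableSet I01)
        intro x _
        exact setIntegral_congr_fun (measurableSet_Icc : MeasurableSet I01)
          (fun y _ => abs_sub_comm _ _)
      rw [heq]
      exact hN n hn
    linarith
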